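/- Let X be a 2-dimensional simplicial complex with a π₁-injective subcomplex K, and let p : X̃ → X be the universal cover. If the preimage p⁻¹(K) is strongly π₁-injective in X̃, then K is strongly π₁-injective in X. -/

import Mathlib

open scoped Classical
open Geometry

/-- Injectivity (trivial kernel, at every base point) of the inclusion-induced map
`π₁(A) → π₁(B)` for `A ⊆ B`. -/
def PiOneInjIncl {X : Type*} [TopologicalSpace X] {A B : Set X} (hAB : A ⊆ B) : Prop :=
  ∀ (a : A) (γ : Path a a),
    (γ.map (continuous_inclusion hAB)).Homotopic (Path.refl (Set.inclusion hAB a)) →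
    γ.Homotopic (Path.refl a)

variable {E : Type*} [NormedAddCommGroup E] [NormedSpace ℝ E]
variable {F : Type*} [NormedAddCommGroup F] [NormedSpace ℝ F]

/-- `Y` is a subcomplex of `X`. -/
def IsSubcomplexOf {G : Type*} [NormedAddCommGroup G] [NormedSpace ℝ G]
    (Y X : SimplicialComplex ℝ G) : Prop := Y.faces ⊆ X.faces

lemma space_subset_of_subcomplex {G : Type*} [NormedAddCommGroup G] [NormedSpace ℝ G]
    {Y X : SimplicialComplex ℝ G} (h : IsSubcomplexOf Y X) :
    Y.space ⊆ X.space :=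
  Set.biUnion_subset_biUnion_left h

/-- `X` is (at most) 2-dimensional: every face has at most 3 vertices. -/
def IsTwoDimensional (X : SimplicialComplex ℝ E) : Prop := ∀ s ∈ X.faces, s.card ≤ 3

/-- A subset `P` of the ambient space is strongly π₁-injective in the complex `X`: for every
subcomplex `W` of `X`, the inclusion-induced map `π₁(P ∩ W) → π₁(W)` is injective. -/
def SetStronglyPiOneInjectiveIn {G : Type*} [NormedAddCommGroup G] [NormedSpace ℝ G]
    (P : Set G) (X : SimplicialComplex ℝ G) : Prop :=
  ∀ W : SimplicialComplex ℝ G, IsSubcomplexOf W X →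
    PiOneInjIncl (Set.inter_subset_right : P ∩ W.space ⊆ W.space)

/-- `Y` is strongly π₁-injective in `X`. -/
def StronglyPiOneInjectiveIn {G : Type*} [NormedAddCommGroup G] [NormedSpace ℝ G]
    (Y X : SimplicialComplex ℝ G) : Prop :=
  SetStronglyPiOneInjectiveIn Y.space X


section CoveringLifts
open Set Topology
variable {E' B : Type*} [TopologicalSpace E'] [TopologicalSpace B]

/-- Gluing two continuous-on functions along a hyperplane `z.1 = c`. -/
theorem contOn_ite_le {α β : Type*} [TopologicalSpace α] [TopologicalSpace β]
    {f g : ℝ × α → β} {c : ℝ} {s : Set (ℝ × α)}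
    (hf : ContinuousOn f s) (hg : ContinuousOn g s)
    (heq : ∀ z ∈ s, z.1 = c → f z = g z) :
    ContinuousOn (fun z => if z.1 ≤ c then f z else g z) s := by
  intro z hz
  set s₁ := s ∩ {w : ℝ × α | w.1 ≤ c} with hs₁
  set s₂ := s ∩ {w : ℝ × α | c ≤ w.1} with hs₂
  have hcov : s ⊆ s₁ ∪ s₂ := by
    intro w hw
    rcases le_total w.1 c with h | h
    · exact Or.inl ⟨hw, h⟩
    · exact Or.inr ⟨hw, h⟩
  have e1 : EqOn (fun w : ℝ × α => if w.1 ≤ c then f w else g w) f s₁ := fun w hw => if_pos hw.2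
  have e2 : EqOn (fun w : ℝ × α => if w.1 ≤ c then f w else g w) g s₂ := by
    intro w hw
    by_cases h : w.1 ≤ c
    · simpa [h] using heq w hw.1 (le_antisymm h hw.2)
    · simp [h]
  have c1 : ContinuousWithinAt (fun w : ℝ × α => if w.1 ≤ c then f w else g w) s₁ z := by
    by_cases h : z.1 ≤ c
    · exact ((hf z hz).mono inter_subset_left).congr e1 (if_pos h)
    · refine continuousWithinAt_of_notMem_closure ?_
      intro hcl
      have : z ∈ {w : ℝ × α | w.1 ≤ c} :=
        closure_minimal inter_subset_right (isClosed_le continuous_fst continuous_const) hcl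
      exact h this
  have c2 : ContinuousWithinAt (fun w : ℝ × α => if w.1 ≤ c then f w else g w) s₂ z := by
    by_cases h : c ≤ z.1
    · refine ((hg z hz).mono inter_subset_left).congr e2 ?_
      by_cases h' : z.1 ≤ c
      · simpa [h'] using heq z hz (le_antisymm h' h)
      · simp [h']
    · refine continuousWithinAt_of_notMem_closure ?_
      intro hcl
      have : z ∈ {w : ℝ × α | c ≤ w.1} :=
        closure_minimal inter_subset_right (isClosed_le continuous_const continuous_fst) hcl
      exact h this
  exact (c1.union c2).mono hcov

/-- The range of a covering map is closed. -/
theorem covering_isClosed_range {f : E' → B} (hf : IsCoveringMap f) : IsClosed (range f) := by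
  rw [← isOpen_compl_iff, isOpen_iff_forall_mem_open]
  intro x hx
  obtain ⟨_, U, hxU, hU, _, H, _⟩ := hf x
  refine ⟨U, ?_, hU, hxU⟩
  rintro y hy ⟨e, rfl⟩
  exact hx ⟨_, (H ⟨e, hy⟩).2.2⟩

/-- Local parametrized lifting along a covering map. -/
theorem loc_lift {f : E' → B} (hf : IsCoveringMap f)
    {H : ℝ × ℝ → B} (hH : Continuous H) {ι : ℝ → E'} (hι : Continuous ι)
    (h0 : ∀ a, f (ι a) = H (0, a)) (a₀ : ℝ) :
    ∃ N : Set ℝ, IsOpen N ∧ a₀ ∈ N ∧ ∃ G : ℝ × ℝ → E',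
      ContinuousOn G (univ ×ˢ N) ∧ (∀ a ∈ N, G (0, a) = ι a) ∧
      ∀ t ∈ Icc (0:ℝ) 1, ∀ a ∈ N, f (G (t, a)) = H (t, a) := by
  classical
  -- trivializations at points of the segment
  have hcl : IsClopen (range f) := ⟨covering_isClosed_range hf, hf.isOpenMap.isOpen_range⟩
  have hne : ∀ t : ℝ, Nonempty ↥(f ⁻¹' {H (t, a₀)}) := by
    have hS : (fun t : ℝ => H (t, a₀)) ⁻¹' range f = univ :=
      (hcl.preimage (hH.comp (continuous_id.prodMk continuous_const))).eq_univ ⟨0, ι a₀, h0 a₀⟩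
    intro t
    obtain ⟨e, he⟩ : H (t, a₀) ∈ range f := by
      have := hS.ge (mem_univ t); exact this
    exact ⟨⟨e, he⟩⟩
  let T : ∀ t : ℝ, Bundle.Trivialization (↥(f ⁻¹' {H (t, a₀)})) f :=
    fun t => haveI := hne t; (hf (H (t, a₀))).toTrivialization
  have hmemT : ∀ t : ℝ, H (t, a₀) ∈ (T t).baseSet :=
    fun t => haveI := hne t; (hf (H (t, a₀))).mem_toTrivialization_baseSet
  have hopen : ∀ t : ℝ, IsOpen {z : ℝ × ℝ | H z ∈ (T t).baseSet} :=
    fun t => (T t).open_baseSet.preimage hH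
  have hVW := fun t : ℝ => isOpen_prod_iff.mp (hopen t) t a₀ (hmemT t)
  choose V W hVo hWo htV haW hVWsub using hVW
  -- finite subcover of `Icc 0 1`
  obtain ⟨s, hs⟩ := isCompact_Icc.elim_finite_subcover V hVo
    (fun t ht => mem_iUnion.mpr ⟨t, htV t⟩)
  -- Lebesgue number
  obtain ⟨δ, hδ, hleb⟩ := lebesgue_number_lemma_of_metric (s := Icc (0:ℝ) 1)
    (c := fun i : s => V i) isCompact_Icc (fun i => hVo i) (by
      intro x hx
      obtain ⟨_, ⟨i, rfl⟩, _, ⟨hi, rfl⟩, hxi⟩ := hs hx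
      exact mem_iUnion.mpr ⟨⟨i, hi⟩, hxi⟩)
  set N : Set ℝ := ⋂ i ∈ s, W i with hN
  have hNo : IsOpen N := isOpen_biInter_finset fun i _ => hWo i
  have haN : a₀ ∈ N := mem_biInter fun i _ => haW i
  have hNW : ∀ i ∈ s, N ⊆ W i := fun i hi => biInter_subset_of_mem hi
  -- step size
  obtain ⟨n, hn⟩ := exists_nat_one_div_lt hδ
  set m : ℕ := n + 1 with hm
  have hm0 : (0:ℝ) < m := by positivity
  have hstep : (1:ℝ) / m < δ := by exact_mod_cast hn
  -- the inductive construction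
  have main : ∀ k : ℕ, k ≤ m → ∃ G : ℝ × ℝ → E',
      ContinuousOn G (univ ×ˢ N) ∧ (∀ a ∈ N, G (0, a) = ι a) ∧
      ∀ t ∈ Icc (0:ℝ) ((k:ℝ) / m), ∀ a ∈ N, f (G (t, a)) = H (t, a) := by
    intro k
    induction k with
    | zero =>
      intro _
      refine ⟨fun z => ι z.2, (hι.comp continuous_snd).continuousOn, fun a _ => rfl, ?_⟩
      intro t ht a _
      have : t = 0 := le_antisymm (by simpa using ht.2) ht.1
      rw [this]; exact h0 a
    | succ k ih =>
      intro hk1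
      obtain ⟨G, hGc, hG0, hGl⟩ := ih (Nat.le_of_succ_le hk1)
      set c : ℝ := (k:ℝ) / m with hc
      set c' : ℝ := ((k:ℝ) + 1) / m with hc'
      have hcc' : c ≤ c' := by
        apply div_le_div_of_nonneg_right ?_ hm0.le
        linarith
      have hc0 : 0 ≤ c := by positivity
      have hc1 : c ≤ 1 := by
        rw [hc, div_le_one hm0]
        exact_mod_cast Nat.le_of_succ_le hk1
      have hc'1 : c' ≤ 1 := by
        rw [hc', div_le_one hm0]
        exact_mod_cast hk1
      -- Lebesgue ball around c
      obtain ⟨i, hballi⟩ := hleb c ⟨hc0, hc1⟩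
      have hIccsub : ∀ t ∈ Icc c c', t ∈ V i := by
        intro t ht
        apply hballi
        rw [Metric.mem_ball, Real.dist_eq, abs_sub_lt_iff]
        constructor
        · have : t ≤ c + 1 / m := by
            rw [hc]; rw [hc'] at ht
            calc t ≤ ((k:ℝ)+1)/m := ht.2
            _ = (k:ℝ)/m + 1/m := by ring
          linarith
        · linarith [ht.1]
      have hbase : ∀ t ∈ Icc c c', ∀ a ∈ N, H (t, a) ∈ (T i).baseSet := by
        intro t ht a ha
        exact hVWsub i (mk_mem_prod (hIccsub t ht) (hNW i i.2 ha))
      -- the already-constructed level at `c` sits in the source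
      have hsrc : ∀ a ∈ N, G (c, a) ∈ (T i).source := by
        intro a ha
        rw [Bundle.Trivialization.mem_source, hGl c ⟨hc0, le_refl c⟩ a ha]
        exact hbase c ⟨le_refl c, hcc'⟩ a ha
      -- clamp
      set cl : ℝ → ℝ := fun t => max c (min t c') with hcl
      have hclcont : Continuous cl := continuous_const.max (continuous_id.min continuous_const)
      have hclmem : ∀ t, cl t ∈ Icc c c' := fun t =>
        ⟨le_max_left _ _, max_le hcc' (min_le_right t c')⟩
      have hclc : cl c = c := by
        simp [hcl, min_eq_left hcc']
      have hcleq : ∀ t, c < t → t ≤ c' → cl t = t := by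
        intro t h1 h2
        simp [hcl, min_eq_left h2, max_eq_right (le_of_lt h1)]
      -- the glued function
      set Gb : ℝ × ℝ → E' := fun z =>
        (T i).toOpenPartialHomeomorph.symm (H (cl z.1, z.2), ((T i) (G (c, z.2))).2) with hGb
      have htar : ∀ z ∈ (univ : Set ℝ) ×ˢ N,
          (H (cl z.1, z.2), ((T i) (G (c, z.2))).2) ∈ (T i).target := by
        intro z hz
        rw [Bundle.Trivialization.mem_target]
        exact hbase _ (hclmem z.1) z.2 hz.2
      have hGbc : ContinuousOn Gb (univ ×ˢ N) := by
        have inner : ContinuousOn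
            (fun z : ℝ × ℝ => (H (cl z.1, z.2), ((T i) (G (c, z.2))).2)) (univ ×ˢ N) := by
          apply ContinuousOn.prodMk
          · exact (hH.comp ((hclcont.comp continuous_fst).prodMk continuous_snd)).continuousOn
          · apply ContinuousOn.snd
            apply (T i).toOpenPartialHomeomorph.continuousOn.comp
            · apply hGc.comp (continuous_const.prodMk continuous_snd).continuousOn
              intro z hz
              exact ⟨trivial, hz.2⟩
            · intro z hz
              exact hsrc z.2 hz.2
        exact ((T i).toOpenPartialHomeomorph.continuousOn_symm.comp inner htar)
      have hmatch : ∀ z ∈ (univ : Set ℝ) ×ˢ N, z.1 = c → G z = Gb z := by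
        intro z hz h1
        have hz2 : z.2 ∈ N := hz.2
        have harg : H (cl z.1, z.2) = f (G (c, z.2)) := by
          rw [h1, hclc, hGl c ⟨hc0, le_refl c⟩ z.2 hz2]
        calc G z = G (c, z.2) := by rw [show z = (c, z.2) from Prod.ext h1 rfl]
        _ = (T i).toOpenPartialHomeomorph.symm (f (G (c, z.2)), ((T i) (G (c, z.2))).2) :=
            ((T i).symm_apply_mk_proj (hsrc z.2 hz2)).symm
        _ = Gb z := by
            show _ = (T i.1).toOpenPartialHomeomorph.symm (H (cl z.1, z.2), ((T i.1) (G (c, z.2))).2)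
            rw [harg]
      refine ⟨fun z => if z.1 ≤ c then G z else Gb z,
        contOn_ite_le hGc hGbc hmatch, ?_, ?_⟩
      · intro a ha
        simp only [if_pos hc0]
        exact hG0 a ha
      · intro t ht a ha
        by_cases h : t ≤ c
        · simp only [if_pos h]
          exact hGl t ⟨ht.1, h⟩ a ha
        · simp only [if_neg h]
          push_neg at h
          have ht2 : t ≤ c' := by rw [hc']; push_cast at ht ⊢; exact_mod_cast ht.2
          have hteq : cl t = t := hcleq t h ht2
          have := (T i).proj_symm_apply (htar (t, a) ⟨trivial, ha⟩)
          simp only [hGb]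
          rw [this, hteq]
  obtain ⟨G, hGc, hG0, hGl⟩ := main m (le_refl m)
  refine ⟨N, hNo, haN, G, hGc, hG0, ?_⟩
  intro t ht a ha
  apply hGl t ?_ a ha
  rwa [div_self (ne_of_gt hm0)]

/-- Path lifting for covering maps. -/
theorem path_lift {f : E' → B} (hf : IsCoveringMap f)
    {g : ℝ → B} (hg : Continuous g) (e₀ : E') (he : f e₀ = g 0) :
    ∃ G : ℝ → E', ContinuousOn G (Icc (0:ℝ) 1) ∧ G 0 = e₀ ∧
      ∀ t ∈ Icc (0:ℝ) 1, f (G t) = g t := by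
  obtain ⟨N, _, haN, G, hGc, hG0, hGl⟩ :=
    loc_lift hf (H := fun z : ℝ × ℝ => g z.1) (hg.comp continuous_fst)
      (ι := fun _ => e₀) continuous_const (fun _ => he) 0
  refine ⟨fun t => G (t, 0), ?_, hG0 0 haN, fun t ht => hGl t ht 0 haN⟩
  exact hGc.comp (continuous_id.prodMk continuous_const).continuousOn
    (fun t _ => ⟨trivial, haN⟩)

/-- Homotopy lifting for covering maps (lifting in the first coordinate,
with given continuous initial lift at time `0`). -/
theorem key_lift {f : E' → B} (hf : IsCoveringMap f)
    {H : ℝ × ℝ → B} (hH : Continuous H) {ι : ℝ → E'} (hι : Continuous ι)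
    (h0 : ∀ a, f (ι a) = H (0, a)) :
    ∃ F : ℝ × ℝ → E', ContinuousOn F (Icc (0:ℝ) 1 ×ˢ (univ : Set ℝ)) ∧
      (∀ a, F (0, a) = ι a) ∧ ∀ t ∈ Icc (0:ℝ) 1, ∀ a, f (F (t, a)) = H (t, a) := by
  have hcurve : ∀ a : ℝ, Continuous fun t => H (t, a) := fun a =>
    hH.comp (continuous_id.prodMk continuous_const)
  choose G hGc hG0 hGl using fun a : ℝ => path_lift hf (hcurve a) (ι a) (h0 a)
  refine ⟨fun z => G z.2 z.1, ?_, fun a => hG0 a, fun t ht a => hGl a t ht⟩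
  intro z hz
  obtain ⟨N, hNo, haN, G', hG'c, hG'0, hG'l⟩ := loc_lift hf hH hι h0 z.2
  have heq : EqOn (fun z : ℝ × ℝ => G z.2 z.1) G' (Icc (0:ℝ) 1 ×ˢ N) := by
    intro w hw
    have h2 : ContinuousOn (fun t => G' (t, w.2)) (Icc (0:ℝ) 1) :=
      hG'c.comp (continuous_id.prodMk continuous_const).continuousOn
        (fun t _ => ⟨trivial, hw.2⟩)
    have := hf.eqOn_of_comp_eqOn (s := Icc (0:ℝ) 1) isPreconnected_Icc
      (g₁ := fun t => G w.2 t) (g₂ := fun t => G' (t, w.2)) (hGc w.2) h2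
      (fun t ht => by
        simp only [Function.comp_apply]
        rw [hGl w.2 t ht, hG'l t ht w.2 hw.2])
      (a := 0) ⟨le_refl 0, zero_le_one⟩
      (by show G w.2 0 = G' (0, w.2); rw [hG0 w.2, hG'0 w.2 hw.2])
    exact this hw.1
  have hmem : z ∈ Icc (0:ℝ) 1 ×ˢ N := ⟨hz.1, haN⟩
  have c1 : ContinuousWithinAt G' (Icc (0:ℝ) 1 ×ˢ N) z :=
    (hG'c z ⟨trivial, haN⟩).mono (prod_mono_left (subset_univ _))
  have c2 : ContinuousWithinAt (fun z : ℝ × ℝ => G z.2 z.1) (Icc (0:ℝ) 1 ×ˢ N) z :=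
    c1.congr heq (heq hmem)
  apply c2.mono_of_mem_nhdsWithin
  have : Icc (0:ℝ) 1 ×ˢ N = (Icc (0:ℝ) 1 ×ˢ (univ : Set ℝ)) ∩ ((univ : Set ℝ) ×ˢ N) := by
    rw [prod_inter_prod, inter_univ, univ_inter]
  rw [this]
  exact inter_mem_nhdsWithin _ ((isOpen_univ.prod hNo).mem_nhds ⟨trivial, haN⟩)

/-- A covering map onto a preconnected space with nonempty total space is surjective. -/
theorem covering_surj {f : E' → B} (hf : IsCoveringMap f) [PreconnectedSpace B]
    [Nonempty E'] : Function.Surjective f := by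
  have hopen : IsOpen (range f) := hf.isOpenMap.isOpen_range
  have hclosed : IsClosed (range f) := covering_isClosed_range hf
  intro b
  have h : range f = univ := IsClopen.eq_univ ⟨hclosed, hopen⟩ (range_nonempty f)
  have : b ∈ range f := h.ge (mem_univ b)
  exact this

end CoveringLifts

/-- Let `X` be a 2-dimensional simplicial complex with a π₁-injective
subcomplex `K`, and let `p : X̃ → X` be the universal cover (`X̃` a simplicial complex whose
space is simply connected, `p` a covering map under which the preimage of any subcomplex of
`X` is a subcomplex of `X̃`). If the preimage `p⁻¹(K)` is strongly π₁-injective in `X̃`, then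
`K` is strongly π₁-injective in `X`. -/

theorem strongly_piOne_injective_of_preimage_in_universal_cover
    (X : SimplicialComplex ℝ E)
    (hdim : IsTwoDimensional X) (hconn : ConnectedSpace X.space)
    (X' : SimplicialComplex ℝ F) (p : X'.space → X.space)
    (hcov : IsCoveringMap p) (huniv : SimplyConnectedSpace X'.space)
    (hsimplicial : ∀ Z : SimplicialComplex ℝ E, IsSubcomplexOf Z X →
      ∃ W : SimplicialComplex ℝ F, IsSubcomplexOf W X' ∧
        Subtype.val '' (p ⁻¹' {x : X.space | (x : E) ∈ Z.space}) = W.space)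
    (K : SimplicialComplex ℝ E) (hK : IsSubcomplexOf K X)
    (hKinj : PiOneInjIncl (space_subset_of_subcomplex hK))
    (hpre : SetStronglyPiOneInjectiveIn
      (Subtype.val '' (p ⁻¹' {x : X.space | (x : E) ∈ K.space})) X') :
    StronglyPiOneInjectiveIn K X := by
  intro Z hZ a γ hγ
  classical
  have hZX : Z.space ⊆ X.space := space_subset_of_subcomplex hZ
  have haK : (a : E) ∈ K.space := a.2.1
  have haZ : (a : E) ∈ Z.space := a.2.2
  set x₀ : X.space := ⟨(a : E), hZX haZ⟩ with hx₀
  have hpc : PreconnectedSpace ↥X.space := hconn.toPreconnectedSpace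
  have hne : Nonempty ↥X'.space := inferInstance
  obtain ⟨e₀, he₀⟩ := covering_surj hcov x₀
  obtain ⟨Hz⟩ := hγ
  set pr : ℝ → unitInterval := Set.projIcc 0 1 zero_le_one with hprdef
  have hpr : Continuous pr := continuous_projIcc
  have hpr0 : pr 0 = 0 := Subtype.ext (by rw [hprdef]; simp [Set.projIcc])
  have hpr1 : pr 1 = 1 := Subtype.ext (by rw [hprdef]; simp [Set.projIcc])
  set H : ℝ × ℝ → ↥X.space := fun z => Set.inclusion hZX (Hz (pr z.1, pr z.2)) with hHdef
  have hHcont : Continuous H :=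
    (continuous_inclusion hZX).comp (Hz.continuous.comp
      ((hpr.comp continuous_fst).prodMk (hpr.comp continuous_snd)))
  have hH0 : ∀ t : ℝ, (H (0, t) : E) = (γ (pr t) : E) := by
    intro t
    show ((Hz (pr 0, pr t) : ↥Z.space) : E) = _
    rw [hpr0, Hz.apply_zero]
    rfl
  have hHs0 : ∀ s : ℝ, H (s, 0) = x₀ := by
    intro s
    apply Subtype.ext
    show ((Hz (pr s, pr 0) : ↥Z.space) : E) = (a : E)
    rw [hpr0, Path.Homotopy.source Hz (pr s)]
  have hHs1 : ∀ s : ℝ, H (s, 1) = x₀ := by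
    intro s
    apply Subtype.ext
    show ((Hz (pr s, pr 1) : ↥Z.space) : E) = (a : E)
    rw [hpr1, Path.Homotopy.target Hz (pr s)]
  have hH1 : ∀ t : ℝ, H (1, t) = x₀ := by
    intro t
    apply Subtype.ext
    show ((Hz (pr 1, pr t) : ↥Z.space) : E) = (a : E)
    rw [hpr1, Hz.apply_one]
    rfl
  -- lift the loop
  have hγXcont : Continuous (fun t : ℝ => H (0, t)) :=
    hHcont.comp (continuous_const.prodMk continuous_id)
  have hstart : p e₀ = H (0, 0) := by
    rw [he₀]
    apply Subtype.ext
    rw [hH0 0, hpr0, γ.source]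
  obtain ⟨G₁, hG₁c, hG₁0, hG₁l⟩ := path_lift hcov hγXcont e₀ hstart
  set ι : ℝ → ↥X'.space := fun t => G₁ ((pr t : unitInterval) : ℝ) with hιdef
  have hιcont : Continuous ι :=
    hG₁c.comp_continuous (continuous_subtype_val.comp hpr) (fun t => (pr t).2)
  have h0 : ∀ t : ℝ, p (ι t) = H (0, t) := by
    intro t
    have h1 : pr ((pr t : unitInterval) : ℝ) = pr t := Set.projIcc_val zero_le_one (pr t)
    rw [hιdef]
    show p (G₁ ((pr t : unitInterval) : ℝ)) = _
    rw [hG₁l _ (pr t).2]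
    show Set.inclusion hZX (Hz (pr 0, pr ((pr t : unitInterval) : ℝ))) = _
    rw [h1]
  obtain ⟨Fl, hFc, hF0, hFl⟩ := key_lift hcov hHcont hιcont h0
  have h01 : (0:ℝ) ∈ Set.Icc (0:ℝ) 1 := ⟨le_refl 0, zero_le_one⟩
  have h11 : (1:ℝ) ∈ Set.Icc (0:ℝ) 1 := ⟨zero_le_one, le_refl 1⟩
  have hsliceT : ∀ a' : ℝ, ContinuousOn (fun t => Fl (t, a')) (Set.Icc (0:ℝ) 1) := by
    intro a'
    exact hFc.comp (continuous_id.prodMk continuous_const).continuousOn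
      (fun t ht => ⟨ht, trivial⟩)
  have hsliceA : ∀ t ∈ Set.Icc (0:ℝ) 1, ContinuousOn (fun a' => Fl (t, a')) (Set.Icc (0:ℝ) 1) := by
    intro t ht
    exact hFc.comp (continuous_const.prodMk continuous_id).continuousOn
      (fun a' _ => ⟨ht, trivial⟩)
  have hpr0v : ((pr 0 : unitInterval) : ℝ) = 0 := by rw [hpr0]; rfl
  have hpr1v : ((pr 1 : unitInterval) : ℝ) = 1 := by rw [hpr1]; rfl
  have hF00 : Fl (0, 0) = e₀ := by rw [hF0 0, hιdef]; show G₁ _ = e₀; rw [hpr0v, hG₁0]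
  have hF01 : Fl (0, 1) = G₁ 1 := by rw [hF0 1, hιdef]; show G₁ _ = G₁ 1; rw [hpr1v]
  have hEdge0 : ∀ t ∈ Set.Icc (0:ℝ) 1, Fl (t, 0) = e₀ := by
    have := hcov.eqOn_of_comp_eqOn (s := Set.Icc (0:ℝ) 1) isPreconnected_Icc
      (g₁ := fun t => Fl (t, 0)) (g₂ := fun _ => e₀) (hsliceT 0) continuousOn_const
      (fun t ht => by
        show p (Fl (t, 0)) = p e₀
        rw [hFl t ht 0, hHs0 t, he₀])
      h01 hF00
    exact fun t ht => this ht
  have hEdge1 : ∀ t ∈ Set.Icc (0:ℝ) 1, Fl (t, 1) = G₁ 1 := by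
    have := hcov.eqOn_of_comp_eqOn (s := Set.Icc (0:ℝ) 1) isPreconnected_Icc
      (g₁ := fun t => Fl (t, 1)) (g₂ := fun _ => G₁ 1) (hsliceT 1) continuousOn_const
      (fun t ht => by
        show p (Fl (t, 1)) = p (G₁ 1)
        rw [hFl t ht 1, hHs1 t, hG₁l 1 h11, hHs1 0])
      h01 hF01
    exact fun t ht => this ht
  have hTop : ∀ b' ∈ Set.Icc (0:ℝ) 1, Fl (1, b') = e₀ := by
    have := hcov.eqOn_of_comp_eqOn (s := Set.Icc (0:ℝ) 1) isPreconnected_Icc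
      (g₁ := fun b' => Fl (1, b')) (g₂ := fun _ => e₀) (hsliceA 1 h11) continuousOn_const
      (fun b' hb' => by
        show p (Fl (1, b')) = p e₀
        rw [hFl 1 h11 b', hH1 b', he₀])
      h01 (hEdge0 1 h11)
    exact fun b' hb' => this hb'
  have hG₁1 : G₁ 1 = e₀ := by rw [← hEdge1 1 h11, hTop 1 h11]
  -- pass to the subcomplex upstairs
  obtain ⟨W', hW'sub, hW'sp⟩ := hsimplicial Z hZ
  have hW'X' : W'.space ⊆ X'.space := space_subset_of_subcomplex hW'sub
  set P : Set F := Subtype.val '' (p ⁻¹' {x : ↥X.space | (x : E) ∈ K.space}) with hPdef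
  have hFlZ : ∀ s ∈ Set.Icc (0:ℝ) 1, ∀ t : ℝ, ((p (Fl (s, t))) : E) ∈ Z.space := by
    intro s hs t
    rw [hFl s hs t]
    exact (Hz (pr s, pr t)).2
  have hmemW : ∀ s ∈ Set.Icc (0:ℝ) 1, ∀ t : ℝ, ((Fl (s, t)) : F) ∈ W'.space := by
    intro s hs t
    rw [← hW'sp]
    exact ⟨Fl (s, t), hFlZ s hs t, rfl⟩
  have hmemP : ∀ t : ℝ, ((Fl (0, t)) : F) ∈ P := by
    intro t
    refine ⟨Fl (0, t), ?_, rfl⟩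
    show ((p (Fl (0, t)) : ↥X.space) : E) ∈ K.space
    rw [hFl 0 h01 t, hH0 t]
    exact (γ (pr t)).2.1
  have hbP : (e₀ : F) ∈ P := ⟨e₀, by show ((p e₀ : ↥X.space) : E) ∈ K.space; rw [he₀]; exact haK, rfl⟩
  have hbW : (e₀ : F) ∈ W'.space := by
    rw [← hW'sp]
    exact ⟨e₀, by show ((p e₀ : ↥X.space) : E) ∈ Z.space; rw [he₀]; exact haZ, rfl⟩
  set b : ↥(P ∩ W'.space) := ⟨(e₀ : F), hbP, hbW⟩ with hbdef
  have hΛcont : Continuous (fun t : unitInterval => Fl (0, (t : ℝ))) :=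
    hFc.comp_continuous (continuous_const.prodMk continuous_subtype_val)
      (fun t => ⟨h01, trivial⟩)
  set Λ : Path b b :=
    { toFun := fun t => ⟨(Fl (0, (t : ℝ)) : F), hmemP _, hmemW 0 h01 _⟩
      continuous_toFun := Continuous.subtype_mk (continuous_subtype_val.comp hΛcont) _
      source' := by
        apply Subtype.ext
        show (Fl ((0:ℝ), ((0 : unitInterval) : ℝ)) : F) = ((e₀ : ↥X'.space) : F)
        exact congrArg Subtype.val hF00
      target' := by
        apply Subtype.ext
        show (Fl ((0:ℝ), ((1 : unitInterval) : ℝ)) : F) = ((e₀ : ↥X'.space) : F)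
        exact congrArg Subtype.val (hF01.trans hG₁1) } with hΛdef
  have hloopW : (Λ.map (continuous_inclusion Set.inter_subset_right)).Homotopic
      (Path.refl (Set.inclusion Set.inter_subset_right b)) := by
    refine ⟨{ toFun := fun z => ⟨(Fl ((z.1 : ℝ), (z.2 : ℝ)) : F), hmemW _ z.1.2 _⟩
              continuous_toFun := ?_
              map_zero_left := ?_
              map_one_left := ?_
              prop' := ?_ }⟩
    · exact Continuous.subtype_mk (continuous_subtype_val.comp
        (hFc.comp_continuous
          ((continuous_subtype_val.comp continuous_fst).prodMk
            (continuous_subtype_val.comp continuous_snd))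
          (fun z => ⟨z.1.2, trivial⟩))) _
    · intro x
      apply Subtype.ext
      rfl
    · intro x
      apply Subtype.ext
      show (Fl (((1 : unitInterval) : ℝ), ((x : unitInterval) : ℝ)) : F) = ((e₀ : ↥X'.space) : F)
      exact congrArg Subtype.val (hTop (x : ℝ) x.2)
    · intro t x hx
      rcases hx with hx | hx
      · subst hx
        apply Subtype.ext
        show (Fl ((t : ℝ), ((0 : unitInterval) : ℝ)) : F)
            = (Fl ((0:ℝ), ((0 : unitInterval) : ℝ)) : F)
        have h1 : (Fl ((t : ℝ), ((0 : unitInterval) : ℝ)) : F) = (e₀ : F) :=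
          congrArg Subtype.val (hEdge0 (t : ℝ) t.2)
        have h2 : (Fl ((0 : ℝ), ((0 : unitInterval) : ℝ)) : F) = (e₀ : F) :=
          congrArg Subtype.val hF00
        exact h1.trans h2.symm
      · simp only [Set.mem_singleton_iff] at hx
        subst hx
        apply Subtype.ext
        show (Fl ((t : ℝ), ((1 : unitInterval) : ℝ)) : F)
            = (Fl ((0:ℝ), ((1 : unitInterval) : ℝ)) : F)
        have h1 : (Fl ((t : ℝ), ((1 : unitInterval) : ℝ)) : F) = (e₀ : F) :=
          congrArg Subtype.val ((hEdge1 (t : ℝ) t.2).trans hG₁1)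
        have h2 : (Fl ((0 : ℝ), ((1 : unitInterval) : ℝ)) : F) = (e₀ : F) :=
          congrArg Subtype.val (hF01.trans hG₁1)
        exact h1.trans h2.symm
  have hΛhom : Λ.Homotopic (Path.refl b) := hpre W' hW'sub b Λ hloopW
  -- map everything back down
  have hq : ∀ y : ↥(P ∩ W'.space),
      ((p ⟨y.1, hW'X' y.2.2⟩ : ↥X.space) : E) ∈ K.space ∩ Z.space := by
    intro y
    obtain ⟨⟨x1, hx1, hval1⟩, hyW⟩ := y.2
    constructor
    · have hx1e : x1 = ⟨y.1, hW'X' y.2.2⟩ := Subtype.ext hval1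
      rw [hx1e] at hx1; exact hx1
    · have hyW' : (y : F) ∈ Subtype.val '' (p ⁻¹' {x : ↥X.space | (x : E) ∈ Z.space}) :=
        (Set.ext_iff.mp hW'sp ((y : F))).mpr hyW
      obtain ⟨x2, hx2, hval2⟩ := hyW'
      have hx2e : x2 = ⟨y.1, hW'X' y.2.2⟩ := Subtype.ext hval2
      rw [hx2e] at hx2; exact hx2
  set q : ↥(P ∩ W'.space) → ↥(K.space ∩ Z.space) := fun y => ⟨_, hq y⟩ with hqdef
  have hqc : Continuous q :=
    Continuous.subtype_mk (continuous_subtype_val.comp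
      (hcov.continuous.comp (Continuous.subtype_mk continuous_subtype_val _))) _
  have hmap := Path.Homotopic.map hΛhom ⟨q, hqc⟩
  obtain ⟨Hq⟩ := hmap
  have hpoint : ∀ x : unitInterval, (Λ.map hqc) x = γ x := by
    intro x
    apply Subtype.ext
    have hmk : (⟨((Λ x) : F), hW'X' (Λ x).2.2⟩ : ↥X'.space) = Fl (0, (x : ℝ)) :=
      Subtype.ext rfl
    show ((p (⟨((Λ x) : F), hW'X' (Λ x).2.2⟩ : ↥X'.space)) : E) = (γ x : E)
    rw [hmk, hFl 0 h01 (x : ℝ), hH0 (x : ℝ)]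
    have hprx : pr ((x : unitInterval) : ℝ) = x := Set.projIcc_val zero_le_one x
    rw [hprx]
  have hrefl : ((Path.refl b).map hqc) 0 = a := by
    apply Subtype.ext
    have hmk : (⟨(e₀ : F), hW'X' b.2.2⟩ : ↥X'.space) = e₀ := Subtype.ext rfl
    show ((p (⟨(e₀ : F), hW'X' b.2.2⟩ : ↥X'.space)) : E) = (a : E)
    rw [hmk, he₀]
  refine ⟨{ toFun := fun z => Hq z
            continuous_toFun := Hq.continuous
            map_zero_left := ?_
            map_one_left := ?_
            prop' := ?_ }⟩
  · intro x
    show Hq ((0 : unitInterval), x) = γ x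
    exact (Hq.apply_zero x).trans (hpoint x)
  · intro x
    show Hq ((1 : unitInterval), x) = (Path.refl a) x
    exact (Hq.apply_one x).trans hrefl
  · intro t x hx
    exact (Hq.prop t x hx).trans (hpoint x)
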